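/- Let G be a graph with n edges that admits a near α-labeling. Then for every positive integer x there exists a cyclic G-decomposition of the complete graph K_{2nx+1}, i.e., a partition of the edge set of the complete graph on vertex set ℤ/(2nx+1)ℤ into subgraphs each isomorphic to G, such that the set of subgraphs in the partition is invariant under the translation v ↦ v + 1 of ℤ/(2nx+1)ℤ. -/

import Mathlib

/-- `f` is a graceful (β-) labeling of the graph `G` with vertex set `S`:
`f` is injective on `S` with values in `{0,…,q}` where `q` is the number of
edges of `G`, all edges of `G` join vertices of `S`, and the induced edge
labels `|f u - f v|` are pairwise distinct. -/
def IsGracefulOn {α : Type*} (G : SimpleGraph α) (S : Set α) (f : α → ℕ) : Prop :=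
  (∀ u v, G.Adj u v → u ∈ S ∧ v ∈ S) ∧
  Set.InjOn f S ∧
  (∀ v ∈ S, f v ≤ G.edgeSet.ncard) ∧
  ∀ u v u' v', G.Adj u v → G.Adj u' v' →
    max (f u) (f v) - min (f u) (f v) = max (f u') (f v') - min (f u') (f v') →
    s(u, v) = s(u', v')

/-- `f` is an α-labeling of `G` (with vertex set `S`) with characteristic `k`:
a graceful labeling such that every edge joins a label `≤ k` to a label `> k`. -/
def IsAlphaOn {α : Type*} (G : SimpleGraph α) (S : Set α) (f : α → ℕ) (k : ℕ) : Prop :=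
  IsGracefulOn G S f ∧
  ∀ u v, G.Adj u v → min (f u) (f v) ≤ k ∧ k < max (f u) (f v)

/-- `f` is a near α-labeling of `G` with respect to the partition `(A, B)` of
its vertex set: a graceful labeling such that every edge is of the form `uv`
with `u ∈ A`, `v ∈ B` and `f u < f v`. -/
def IsNearAlphaOn {α : Type*} (G : SimpleGraph α) (A B : Set α) (f : α → ℕ) : Prop :=
  IsGracefulOn G (A ∪ B) f ∧ Disjoint A B ∧
  ∀ u v, G.Adj u v → (u ∈ A ∧ v ∈ B ∧ f u < f v) ∨ (v ∈ A ∧ u ∈ B ∧ f v < f u)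

private lemma decompUnique {n D D' j j' : ℕ} (h1 : 1 ≤ D) (h2 : D ≤ n)
    (h1' : 1 ≤ D') (h2' : D' ≤ n) (h : D + j * n = D' + j' * n) : D = D' ∧ j = j' := by
  have hj : j = j' := by
    rcases lt_trichotomy j j' with h' | h' | h'
    · have hmul : j * n + n ≤ j' * n := by
        calc j * n + n = (j + 1) * n := by ring
          _ ≤ j' * n := Nat.mul_le_mul (Nat.succ_le_of_lt h') le_rfl
      linarith
    · exact h'
    · have hmul : j' * n + n ≤ j * n := by
        calc j' * n + n = (j' + 1) * n := by ring
          _ ≤ j * n := Nat.mul_le_mul (Nat.succ_le_of_lt h') le_rfl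
      linarith
  subst hj
  exact ⟨Nat.add_right_cancel h, rfl⟩

/-- If a graph `G` with `n` edges admits a near
α-labeling, then for every positive integer `x` there is a cyclic
`G`-decomposition of the complete graph on `ℤ/(2nx+1)ℤ`: a family of copies of
`G` whose edge sets partition the edges of the complete graph, the family
being invariant under the translation `v ↦ v + 1`. -/
theorem stmt10 {V : Type*} (G : SimpleGraph V) (n : ℕ)
    (hn : G.edgeSet.ncard = n)
    (hna : ∃ (f : V → ℕ) (A B : Set V), A ∪ B = Set.univ ∧ IsNearAlphaOn G A B f)
    (x : ℕ) (hx : 0 < x) :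
    ∃ D : Set (SimpleGraph (ZMod (2 * n * x + 1))),
      (∀ K ∈ D, ∃ φ : V ↪ ZMod (2 * n * x + 1), K = G.map φ) ∧
      (⋃ K ∈ D, K.edgeSet) = (⊤ : SimpleGraph (ZMod (2 * n * x + 1))).edgeSet ∧
      (D.Pairwise fun K K' => Disjoint K.edgeSet K'.edgeSet) ∧
      (fun K : SimpleGraph (ZMod (2 * n * x + 1)) =>
          K.map (Equiv.addRight (1 : ZMod (2 * n * x + 1))).toEmbedding) '' D
        = D := by
  classical
  obtain ⟨f, A, B, hAB, hgrace, hdisj, horient⟩ := hna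
  obtain ⟨-, hinj', hle', hdiffinj⟩ := hgrace
  rw [hAB] at hinj' hle'
  have hinj : Function.Injective f := fun a b h => hinj' (Set.mem_univ a) (Set.mem_univ b) h
  have hle : ∀ v, f v ≤ n := fun v => hn ▸ hle' v (Set.mem_univ v)
  rcases Nat.eq_zero_or_pos n with rfl | hn0
  · -- degenerate case: no edges, `ZMod 1` is a subsingleton
    have h1 : 2 * 0 * x + 1 = 1 := by ring
    haveI : Subsingleton (ZMod (2 * 0 * x + 1)) := by
      refine subsingleton_of_zero_eq_one ?_
      have h2 := congrArg (fun k : ℕ => (k : ZMod (2 * 0 * x + 1))) h1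
      rw [ZMod.natCast_self] at h2
      simpa using h2
    refine ⟨∅, by simp, ?_, by simp, by simp⟩
    rw [show (⋃ K ∈ (∅ : Set (SimpleGraph (ZMod (2 * 0 * x + 1)))), K.edgeSet) = ∅ by simp]
    symm
    rw [Set.eq_empty_iff_forall_notMem]
    intro e
    induction e using Sym2.ind with
    | _ a b =>
      rw [SimpleGraph.mem_edgeSet, SimpleGraph.top_adj]
      simp [Subsingleton.elim a b]
  -- main case
  obtain ⟨P, hP⟩ : ∃ P, P = n * x := ⟨_, rfl⟩
  have hlt : ∀ t : ℕ, t ≤ P → t < 2 * n * x + 1 := by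
    intro t ht
    have h2 : 2 * n * x + 1 = P + P + 1 := by rw [hP]; ring
    rw [h2]; omega
  have hnP : n ≤ P := by
    rw [hP]
    calc n = n * 1 := (Nat.mul_one n).symm
      _ ≤ n * x := Nat.mul_le_mul le_rfl hx
  have hbound : ∀ j, j < x → ∀ u, f u + j * n ≤ P := by
    intro j hj u
    calc f u + j * n ≤ n + j * n := Nat.add_le_add_right (hle u) _
      _ = (j + 1) * n := by ring
      _ ≤ x * n := Nat.mul_le_mul (Nat.succ_le_of_lt hj) le_rfl
      _ = P := by rw [hP]; ring
  -- every difference 1,…,n is realized by an edge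
  have hdiffs : ∀ d, 1 ≤ d → d ≤ n → ∃ u v, G.Adj u v ∧ u ∈ A ∧ v ∈ B ∧ f u + d = f v := by
    have hfin : G.edgeSet.Finite := by
      by_contra hcon
      rw [Set.Infinite.ncard hcon] at hn
      omega
    set δ : Sym2 V → ℕ :=
      Sym2.lift ⟨fun u v => max (f u) (f v) - min (f u) (f v),
        fun u v => by dsimp only; rw [max_comm, min_comm]⟩ with hδ
    have hδmk : ∀ u v : V, δ s(u, v) = max (f u) (f v) - min (f u) (f v) := fun u v => rfl
    have himg : δ '' G.edgeSet = Set.Icc 1 n := by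
      have hinjδ : Set.InjOn δ G.edgeSet := by
        intro e he e' he' hEq
        revert he he' hEq
        induction e using Sym2.ind with
        | _ u v =>
          induction e' using Sym2.ind with
          | _ u' v' =>
            intro he he' hEq
            rw [SimpleGraph.mem_edgeSet] at he he'
            rw [hδmk, hδmk] at hEq
            exact hdiffinj u v u' v' he he' hEq
      refine Set.eq_of_subset_of_ncard_le ?_ ?_ (Set.finite_Icc 1 n)
      · rintro _ ⟨e, he, rfl⟩
        revert he
        induction e using Sym2.ind with
        | _ u v =>
          intro he
          rw [SimpleGraph.mem_edgeSet] at he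
          have h1 : f u ≠ f v := fun hc => he.ne (hinj hc)
          have h2 := hle u
          have h3 := hle v
          rw [Set.mem_Icc, hδmk]
          rcases le_total (f u) (f v) with hc | hc
          · rw [max_eq_right hc, min_eq_left hc]; omega
          · rw [max_eq_left hc, min_eq_right hc]; omega
      · rw [Set.ncard_image_of_injOn hinjδ, hn, ← Finset.coe_Icc, Set.ncard_coe_finset,
          Nat.card_Icc]
        omega
    intro d h1 h2
    have hmem : d ∈ δ '' G.edgeSet := by rw [himg]; exact Set.mem_Icc.mpr ⟨h1, h2⟩
    obtain ⟨e, he, hde⟩ := hmem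
    revert he hde
    induction e using Sym2.ind with
    | _ u v =>
      intro he hde
      rw [SimpleGraph.mem_edgeSet] at he
      rw [hδmk] at hde
      rcases horient u v he with ⟨h3, h4, h5⟩ | ⟨h3, h4, h5⟩
      · rw [max_eq_right h5.le, min_eq_left h5.le] at hde
        exact ⟨u, v, he, h3, h4, by omega⟩
      · rw [max_eq_left h5.le, min_eq_right h5.le] at hde
        exact ⟨v, u, he.symm, h3, h4, by omega⟩
  have hABcases : ∀ w, w ∉ A → w ∈ B := by
    intro w hw
    have hw2 : w ∈ A ∪ B := by rw [hAB]; exact Set.mem_univ w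
    rcases hw2 with h | h
    · exact absurd h hw
    · exact h
  -- the vertex labels of the `j`-th base block
  set N : ℕ → V → ℕ := fun j u => if u ∈ A then f u else f u + j * n with hNdef
  have hNA : ∀ j u, u ∈ A → N j u = f u := fun j u h => if_pos h
  have hNB : ∀ j u, u ∉ A → N j u = f u + j * n := fun j u h => if_neg h
  have hNlt : ∀ j, j < x → ∀ u, N j u < 2 * n * x + 1 := by
    intro j hj u
    by_cases h : u ∈ A
    · rw [hNA j u h]; exact hlt _ (le_trans (hle u) hnP)
    · rw [hNB j u h]; exact hlt _ (hbound j hj u)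
  have hmixed : ∀ j u u', u ∈ A → u' ∉ A → f u = f u' + j * n → False := by
    intro j u u' hu hu' hN
    have hu'B := hABcases u' hu'
    rcases Nat.eq_zero_or_pos j with rfl | hj0
    · rw [Nat.zero_mul, Nat.add_zero] at hN
      have huu := hinj hN
      exact hu' (huu ▸ hu)
    · have hfu' : f u' + j * n ≤ n := by rw [← hN]; exact hle u
      have h2n : j < 2 := by
        by_contra h2
        push_neg at h2
        have hx2 : 2 * n ≤ j * n := Nat.mul_le_mul h2 le_rfl
        have hb : j * n ≤ n := le_trans (Nat.le_add_left _ _) hfu'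
        linarith
      have hj1 : j = 1 := by omega
      subst hj1
      rw [Nat.one_mul] at hfu' hN
      obtain ⟨u0, v0, hadj0, hu0, hv0, hf0⟩ := hdiffs n hn0 le_rfl
      have hv0n : f v0 ≤ n := hle v0
      have huv0 : u = v0 := hinj (by omega)
      exact (Set.disjoint_left.mp hdisj (huv0 ▸ hu)) hv0
  have hginj : ∀ j, j < x → ∀ u u' : V,
      ((N j u : ℕ) : ZMod (2 * n * x + 1)) = ((N j u' : ℕ) : ZMod (2 * n * x + 1)) → u = u' := by
    intro j hj u u' hEq
    have hN : N j u = N j u' := by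
      have e1 := ZMod.val_cast_of_lt (n := 2 * n * x + 1) (hNlt j hj u)
      have e2 := ZMod.val_cast_of_lt (n := 2 * n * x + 1) (hNlt j hj u')
      rw [← e1, ← e2, hEq]
    by_cases hu : u ∈ A <;> by_cases hu' : u' ∈ A
    · rw [hNA j u hu, hNA j u' hu'] at hN; exact hinj hN
    · rw [hNA j u hu, hNB j u' hu'] at hN
      exact (hmixed j u u' hu hu' hN).elim
    · rw [hNB j u hu, hNA j u' hu'] at hN
      exact (hmixed j u' u hu' hu hN.symm).elim
    · rw [hNB j u hu, hNB j u' hu'] at hN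
      exact hinj (Nat.add_right_cancel hN)
  have hdiffedge : ∀ (j : ℕ) (u v : V), u ∈ A → v ∈ B → f u < f v →
      ((N j v : ℕ) : ZMod (2 * n * x + 1)) =
        ((N j u : ℕ) : ZMod (2 * n * x + 1)) +
          (((f v - f u) + j * n : ℕ) : ZMod (2 * n * x + 1)) := by
    intro j u v hu hv hf
    have hvA : v ∉ A := fun h => Set.disjoint_left.mp hdisj h hv
    have hsum : f u + (f v - f u) = f v := by omega
    have hNv : N j v = N j u + ((f v - f u) + j * n) := by
      rw [hNB j v hvA, hNA j u hu, ← Nat.add_assoc, hsum]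
    rw [hNv, Nat.cast_add]
  -- the embeddings
  let ψ : Fin x → ZMod (2 * n * x + 1) → (V ↪ ZMod (2 * n * x + 1)) := fun j i =>
    ⟨fun u => ((N j.1 u : ℕ) : ZMod (2 * n * x + 1)) + i,
     fun u u' h => hginj j.1 j.2 u u' (add_right_cancel h)⟩
  have hψ : ∀ (j : Fin x) (i : ZMod (2 * n * x + 1)) (u : V),
      ψ j i u = ((N j.1 u : ℕ) : ZMod (2 * n * x + 1)) + i := fun _ _ _ => rfl
  have hψdiff : ∀ (j : Fin x) (i : ZMod (2 * n * x + 1)) (u v : V),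
      u ∈ A → v ∈ B → f u < f v →
      ψ j i v = ψ j i u + (((f v - f u) + j.1 * n : ℕ) : ZMod (2 * n * x + 1)) := by
    intro j i u v hu hv hf
    rw [hψ, hψ, hdiffedge j.1 u v hu hv hf]
    ring
  have hadj' : ∀ (j : Fin x) (i : ZMod (2 * n * x + 1)) (a b : ZMod (2 * n * x + 1)),
      (G.map (ψ j i)).Adj a b →
      ∃ u v, G.Adj u v ∧ u ∈ A ∧ v ∈ B ∧ f u < f v ∧
        ((ψ j i u = a ∧ ψ j i v = b) ∨ (ψ j i u = b ∧ ψ j i v = a)) := by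
    intro j i a b h
    rw [SimpleGraph.map_adj] at h
    obtain ⟨u, v, hadj, hu, hv⟩ := h
    rcases horient u v hadj with ⟨h1, h2, h3⟩ | ⟨h1, h2, h3⟩
    · exact ⟨u, v, hadj, h1, h2, h3, Or.inl ⟨hu, hv⟩⟩
    · exact ⟨v, u, hadj.symm, h1, h2, h3, Or.inr ⟨hv, hu⟩⟩
  have hEqD : ∀ dd dd' : ℕ, dd ≤ P → dd' ≤ P →
      ((dd : ℕ) : ZMod (2 * n * x + 1)) = ((dd' : ℕ) : ZMod (2 * n * x + 1)) → dd = dd' := by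
    intro dd dd' h1 h2 h
    have e1 := ZMod.val_cast_of_lt (n := 2 * n * x + 1) (hlt dd h1)
    have e2 := ZMod.val_cast_of_lt (n := 2 * n * x + 1) (hlt dd' h2)
    rw [← e1, ← e2, h]
  have hImposs : ∀ dd dd' : ℕ, 1 ≤ dd → dd ≤ P → 1 ≤ dd' → dd' ≤ P →
      ((dd : ℕ) : ZMod (2 * n * x + 1)) = -((dd' : ℕ) : ZMod (2 * n * x + 1)) → False := by
    intro dd dd' h1 h2 h3 h4 h
    have hz : ((dd + dd' : ℕ) : ZMod (2 * n * x + 1)) = 0 := by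
      push_cast
      rw [h]
      ring
    rw [ZMod.natCast_eq_zero_iff] at hz
    have hle2 := Nat.le_of_dvd (by omega) hz
    have hPP : 2 * n * x + 1 = P + P + 1 := by rw [hP]; ring
    rw [hPP] at hle2
    omega
  have hfinal : ∀ (j j' : Fin x) (i i' : ZMod (2 * n * x + 1)) (u v u' v' : V),
      G.Adj u v → G.Adj u' v' → u ∈ A → v ∈ B → f u < f v → u' ∈ A → v' ∈ B → f u' < f v' →
      (((f v - f u) + j.1 * n : ℕ) : ZMod (2 * n * x + 1)) =
        (((f v' - f u') + j'.1 * n : ℕ) : ZMod (2 * n * x + 1)) →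
      ψ j i u = ψ j' i' u' → G.map (ψ j i) = G.map (ψ j' i') := by
    intro j j' i i' u v u' v' hadj hadj2 huA hvB hflt huA' hvB' hflt' hdd hend
    have hb1 : (f v - f u) + j.1 * n ≤ P :=
      le_trans (Nat.add_le_add_right (Nat.sub_le _ _) _) (hbound j.1 j.2 v)
    have hb2 : (f v' - f u') + j'.1 * n ≤ P :=
      le_trans (Nat.add_le_add_right (Nat.sub_le _ _) _) (hbound j'.1 j'.2 v')
    have hd : (f v - f u) + j.1 * n = (f v' - f u') + j'.1 * n := hEqD _ _ hb1 hb2 hdd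
    obtain ⟨hD, hj⟩ := decompUnique (by omega) (by have := hle v; omega)
      (by omega) (by have := hle v'; omega) hd
    have hjj : j = j' := Fin.ext hj
    subst hjj
    have hs : s(u, v) = s(u', v') := by
      refine hdiffinj u v u' v' hadj hadj2 ?_
      rw [max_eq_right hflt.le, min_eq_left hflt.le, max_eq_right hflt'.le,
        min_eq_left hflt'.le]
      exact hD
    rw [Sym2.eq_iff] at hs
    rcases hs with ⟨hu, hv⟩ | ⟨huv, hvu⟩
    · subst hu
      have hii : i = i' := by
        rw [hψ, hψ] at hend
        exact add_left_cancel hend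
      rw [hii]
    · exact absurd (by rw [huv]; exact hvB') (Set.disjoint_left.mp hdisj huA)
  -- coverage
  have hcover : ∀ a b : ZMod (2 * n * x + 1), 1 ≤ (b - a).val → (b - a).val ≤ P →
      ∃ (j : Fin x) (i : ZMod (2 * n * x + 1)), (G.map (ψ j i)).Adj a b := by
    intro a b h1 h2
    set d := (b - a).val with hd
    have hdm := Nat.div_add_mod (d - 1) n
    set j := (d - 1) / n with hjdef
    set r := (d - 1) % n with hrdef
    have hr : r < n := Nat.mod_lt _ hn0
    have hd1 : d - 1 + 1 = d := by omega
    have hjx : j < x := by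
      by_contra hcon
      push_neg at hcon
      have hmul : n * x ≤ n * j := Nat.mul_le_mul le_rfl hcon
      linarith [hdm, hd1, h2, hmul, hP]
    obtain ⟨u, v, hadj, huA, hvB, hfd⟩ := hdiffs (r + 1) (by omega) hr
    have hflt : f u < f v := by omega
    have hdd : (f v - f u) + j * n = d := by
      have hm : n * j = j * n := mul_comm n j
      have h5 : f v - f u = r + 1 := by omega
      rw [h5]
      linarith [hdm, hd1, hm]
    refine ⟨⟨j, hjx⟩, a - ((N j u : ℕ) : ZMod (2 * n * x + 1)), ?_⟩
    rw [SimpleGraph.map_adj]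
    refine ⟨u, v, hadj, ?_, ?_⟩
    · rw [hψ]
      show ((N j u : ℕ) : ZMod (2 * n * x + 1)) + (a - ((N j u : ℕ) : ZMod (2 * n * x + 1))) = a
      ring
    · rw [hψdiff ⟨j, hjx⟩ _ u v huA hvB hflt, hψ]
      have hcast : (((f v - f u) + (⟨j, hjx⟩ : Fin x).1 * n : ℕ) : ZMod (2 * n * x + 1))
          = b - a := by
        rw [show (f v - f u) + (⟨j, hjx⟩ : Fin x).1 * n = d from hdd, hd]
        exact ZMod.natCast_zmod_val (b - a)
      rw [hcast]
      show ((N j u : ℕ) : ZMod (2 * n * x + 1)) +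
          (a - ((N j u : ℕ) : ZMod (2 * n * x + 1))) + (b - a) = b
      ring
  -- the shift property
  have hshift : ∀ (j : Fin x) (i : ZMod (2 * n * x + 1)),
      (ψ j i).trans (Equiv.addRight (1 : ZMod (2 * n * x + 1))).toEmbedding = ψ j (i + 1) := by
    intro j i
    refine Function.Embedding.ext fun u => ?_
    simp only [Function.Embedding.trans_apply, Equiv.coe_toEmbedding, Equiv.coe_addRight, hψ]
    rw [add_assoc]
  -- assemble
  refine ⟨{K | ∃ (j : Fin x) (i : ZMod (2 * n * x + 1)), K = G.map (ψ j i)}, ?_, ?_, ?_, ?_⟩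
  · rintro K ⟨j, i, rfl⟩
    exact ⟨ψ j i, rfl⟩
  · ext e
    induction e using Sym2.ind with
    | _ a b =>
      simp only [Set.mem_iUnion, Set.mem_setOf_eq, SimpleGraph.mem_edgeSet,
        SimpleGraph.top_adj, exists_prop]
      constructor
      · rintro ⟨K, ⟨j, i, rfl⟩, hKe⟩
        exact hKe.ne
      · intro hab
        have hne0 : b - a ≠ 0 := sub_ne_zero.mpr (Ne.symm hab)
        have hpos : 1 ≤ (b - a).val := Nat.one_le_iff_ne_zero.mpr
          (fun hc => hne0 ((ZMod.val_eq_zero _).mp hc))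
        have hPP : 2 * n * x + 1 = P + P + 1 := by rw [hP]; ring
        have hvlt : (b - a).val < P + P + 1 := lt_of_lt_of_eq (ZMod.val_lt _) hPP
        rcases le_or_gt ((b - a).val) P with h | h
        · obtain ⟨j, i, hadj⟩ := hcover a b hpos h
          exact ⟨G.map (ψ j i), ⟨j, i, rfl⟩, hadj⟩
        · have hba : (a - b) = -(b - a) := by ring
          have hv0 : (a - b).val = 2 * n * x + 1 - (b - a).val := by
            rw [hba, ZMod.neg_val, if_neg hne0]
          have hv : (a - b).val = P + P + 1 - (b - a).val := by
            rw [hv0]; exact congrArg (fun t => t - (b - a).val) hPP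
          obtain ⟨j, i, hadj⟩ := hcover b a (by omega) (by omega)
          exact ⟨G.map (ψ j i), ⟨j, i, rfl⟩, hadj.symm⟩
  · intro K hK K' hK' hne
    obtain ⟨j, i, rfl⟩ := hK
    obtain ⟨j', i', rfl⟩ := hK'
    rw [Set.disjoint_left]
    intro e he he'
    refine absurd ?_ hne
    revert he he'
    induction e using Sym2.ind with
    | _ a b =>
      intro he he'
      rw [SimpleGraph.mem_edgeSet] at he he'
      obtain ⟨u, v, hadj, huA, hvB, hflt, hor⟩ := hadj' j i a b he
      obtain ⟨u', v', hadj2, huA', hvB', hflt', hor'⟩ := hadj' j' i' a b he'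
      have hb1 : (f v - f u) + j.1 * n ≤ P :=
        le_trans (Nat.add_le_add_right (Nat.sub_le _ _) _) (hbound j.1 j.2 v)
      have hb2 : (f v' - f u') + j'.1 * n ≤ P :=
        le_trans (Nat.add_le_add_right (Nat.sub_le _ _) _) (hbound j'.1 j'.2 v')
      have hb1' : 1 ≤ (f v - f u) + j.1 * n :=
        le_trans (by omega) (Nat.le_add_right (f v - f u) _)
      have hb2' : 1 ≤ (f v' - f u') + j'.1 * n :=
        le_trans (by omega) (Nat.le_add_right (f v' - f u') _)
      have e1 := hψdiff j i u v huA hvB hflt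
      have e2 := hψdiff j' i' u' v' huA' hvB' hflt'
      rcases hor with ⟨ha, hb⟩ | ⟨hb, ha⟩ <;> rcases hor' with ⟨ha', hb'⟩ | ⟨hb', ha'⟩
      · rw [ha, hb] at e1
        rw [ha', hb'] at e2
        exact hfinal j j' i i' u v u' v' hadj hadj2 huA hvB hflt huA' hvB' hflt'
          (add_left_cancel (e1.symm.trans e2)) (ha.trans ha'.symm)
      · rw [ha, hb] at e1
        rw [hb', ha'] at e2
        exact (hImposs _ _ hb1' hb1 hb2' hb2 (by linear_combination -e1 - e2)).elim
      · rw [hb, ha] at e1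
        rw [ha', hb'] at e2
        exact (hImposs _ _ hb1' hb1 hb2' hb2 (by linear_combination -e1 - e2)).elim
      · rw [hb, ha] at e1
        rw [hb', ha'] at e2
        exact hfinal j j' i i' u v u' v' hadj hadj2 huA hvB hflt huA' hvB' hflt'
          (add_left_cancel (e1.symm.trans e2)) (hb.trans hb'.symm)
  · refine Set.Subset.antisymm ?_ ?_
    · rintro _ ⟨K, ⟨j, i, rfl⟩, rfl⟩
      simp only [SimpleGraph.map_map, hshift]
      exact ⟨j, i + 1, by rw [← hshift]; rfl⟩
    · rintro K ⟨j, i, rfl⟩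
      refine ⟨G.map (ψ j (i - 1)), ⟨j, i - 1, rfl⟩, ?_⟩
      simp only [SimpleGraph.map_map, hshift]
      conv_rhs => rw [← sub_add_cancel i 1, ← hshift]
      rfl
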